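/- For every integer k ≥ 2: the set {v₀} ∪ {v_{1,1}, v_{2,1}, …, v_{2k,1}} is a dominating set of the graph G_k of size 2k+1, and every dominating set D of G_k satisfies |D|·(4k−1) ≥ 2k²+1; in particular every dominating set of G_k has more than k/2 vertices. -/

import Mathlib

/-- The underlying (directional) relation of the graph `G_k` (see statement 6). -/
def GkRel (k : ℕ) :
    Option (Fin (2 * k) × Fin (2 * k)) → Option (Fin (2 * k) × Fin (2 * k)) → Prop :=
  fun x y =>
    match x, y with
    | none, some p => k ≤ p.2.val
    | some p, some q =>
        (p.1 ≠ q.1 ∧ q.2 = p.2.rev) ∨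
        (q.1 = p.1.rev ∧ p.2 ≠ q.2 ∧ ¬ (k ≤ p.2.val ∧ k ≤ q.2.val))
    | _, _ => False

/-- The graph `G_k` on `4k² + 1` vertices: `v₀` is adjacent to `v_{i,j}` exactly when
`k+1 ≤ j ≤ 2k`; `v_{i,j}` is adjacent to `v_{i',2k+1-j}` for all `i ≠ i'`; and `v_{i,j}`
is adjacent to `v_{2k+1-i,ℓ}` for all `j ≠ ℓ` such that not both `j ≥ k+1` and `ℓ ≥ k+1`;
there are no other edges. -/
def Gk (k : ℕ) : SimpleGraph (Option (Fin (2 * k) × Fin (2 * k))) :=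
  SimpleGraph.fromRel (GkRel k)

/-- Adjacency dichotomy for two non-`v₀` vertices. -/
lemma Gk_adj_some_some {k : ℕ} {i j i' j' : Fin (2 * k)}
    (h : (Gk k).Adj (some (i, j)) (some (i', j'))) : j' = j.rev ∨ i' = i.rev := by
  rw [Gk, SimpleGraph.fromRel_adj] at h
  rcases h with ⟨-, h | h⟩
  · rcases h with ⟨-, h⟩ | ⟨h, -, -⟩
    · exact Or.inl h
    · exact Or.inr h
  · rcases h with ⟨-, h⟩ | ⟨h, -, -⟩
    · left
      have h2 : j = j'.rev := h
      rw [h2, Fin.rev_rev]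
    · right
      have h2 : i = i'.rev := h
      rw [h2, Fin.rev_rev]

lemma Gk_adj_none {k : ℕ} {p : Fin (2 * k) × Fin (2 * k)}
    (h : (Gk k).Adj none (some p)) : k ≤ p.2.val := by
  rw [Gk, SimpleGraph.fromRel_adj] at h
  rcases h with ⟨-, h | h⟩
  · exact h
  · exact h.elim

/-- For `k ≥ 2`: the set `{v₀} ∪ {v_{1,1}, …, v_{2k,1}}` is a dominating
set of `G_k` of size `2k + 1`, and every dominating set `D` of `G_k` satisfies
`|D|·(4k - 1) ≥ 2k² + 1`; in particular every dominating set has more than `k/2`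
vertices. -/
theorem stmt_7 (k : ℕ) (hk : 2 ≤ k) :
    (∃ D : Set (Option (Fin (2 * k) × Fin (2 * k))),
      D = {none} ∪
        {x | ∃ a : Fin (2 * k), x = some (a, (⟨0, by omega⟩ : Fin (2 * k)))} ∧
      D.ncard = 2 * k + 1 ∧
      ∀ w ∉ D, ∃ x ∈ D, (Gk k).Adj x w) ∧
    ∀ D : Set (Option (Fin (2 * k) × Fin (2 * k))),
      (∀ w ∉ D, ∃ x ∈ D, (Gk k).Adj x w) →
      2 * k ^ 2 + 1 ≤ D.ncard * (4 * k - 1) ∧ k < 2 * D.ncard := by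
  classical
  have h2k : 0 < 2 * k := by omega
  set z : Fin (2 * k) := ⟨0, h2k⟩ with hz
  constructor
  · -- Part 1
    refine ⟨{none} ∪ {x | ∃ a : Fin (2 * k), x = some (a, z)}, rfl, ?_, ?_⟩
    · -- cardinality
      have hT : {x : Option (Fin (2 * k) × Fin (2 * k)) | ∃ a, x = some (a, z)}
          = Set.range (fun a : Fin (2 * k) => some (a, z)) := by
        ext x; simp [Set.range, eq_comm]
      rw [Set.ncard_union_eq ?_ (Set.toFinite _) (Set.toFinite _), hT,
        Set.ncard_singleton]
      · have hinj : Function.Injective (fun a : Fin (2 * k) =>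
            (some (a, z) : Option (Fin (2 * k) × Fin (2 * k)))) := by
          intro a b hab
          simpa using hab
        rw [← Set.image_univ, Set.ncard_image_of_injective _ hinj, Set.ncard_univ,
          Nat.card_eq_fintype_card, Fintype.card_fin]
        omega
      · rw [Set.disjoint_left]
        rintro x hx hx'
        simp only [Set.mem_singleton_iff] at hx
        rcases hx' with ⟨a, ha⟩
        rw [hx] at ha
        exact (Option.some_ne_none _ ha.symm).elim
    · -- domination
      rintro w hw
      match w with
      | none => exact absurd (Or.inl rfl) hw
      | some (i, j) =>
        by_cases hj0 : j = z
        · exact absurd (Or.inr ⟨i, by rw [hj0]⟩) hw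
        · by_cases hjk : k ≤ j.val
          · refine ⟨none, Or.inl rfl, ?_⟩
            rw [Gk, SimpleGraph.fromRel_adj]
            exact ⟨by simp, Or.inl hjk⟩
          · refine ⟨some (i.rev, z), Or.inr ⟨i.rev, rfl⟩, ?_⟩
            rw [Gk, SimpleGraph.fromRel_adj]
            refine ⟨?_, Or.inl (Or.inr ⟨by rw [Fin.rev_rev], ?_, ?_⟩)⟩
            · simp only [ne_eq, Option.some.injEq, Prod.mk.injEq, not_and]
              intro _; exact fun h => hj0 h.symm
            · exact fun h => hj0 h.symm
            · simp only [hz]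
              omega
  · -- Part 2
    intro D hD
    have hkk : k ≤ 2 * k := by omega
    set f : Fin (2 * k) × Fin k → Option (Fin (2 * k) × Fin (2 * k)) :=
      fun p => some (p.1, Fin.castLE hkk p.2) with hf
    have hfinj : Function.Injective f := by
      rintro ⟨a, b⟩ ⟨c, d⟩ h
      simp only [hf, Option.some.injEq, Prod.mk.injEq] at h
      obtain ⟨h1, h2⟩ := h
      refine Prod.ext h1 (Fin.ext ?_)
      simpa using congrArg Fin.val h2
    set S : Finset (Option (Fin (2 * k) × Fin (2 * k))) :=
      insert none (Finset.univ.image f) with hS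
    have hnotmem : (none : Option (Fin (2 * k) × Fin (2 * k))) ∉ Finset.univ.image f := by
      simp [hf]
    have hScard : S.card = 2 * k * k + 1 := by
      rw [hS, Finset.card_insert_of_notMem hnotmem,
        Finset.card_image_of_injective _ hfinj]
      simp [mul_assoc]
    have hmemS : ∀ (i j : Fin (2 * k)), some (i, j) ∈ S ↔ j.val < k := by
      intro i j
      simp only [hS, Finset.mem_insert, Finset.mem_image, Finset.mem_univ, true_and, hf]
      constructor
      · rintro (h | ⟨⟨a, b⟩, h⟩)
        · exact (Option.some_ne_none _ h).elim
        · simp only [Option.some.injEq, Prod.mk.injEq] at h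
          rw [← h.2]
          exact b.isLt
      · intro h
        exact Or.inr ⟨(i, ⟨j.val, h⟩), by simp [Fin.ext_iff]⟩
    have hnoneS : (none : Option (Fin (2 * k) × Fin (2 * k))) ∈ S := Finset.mem_insert_self _ _
    have hDfin : D.Finite := Set.toFinite D
    set DF := hDfin.toFinset with hDF
    set cover : Option (Fin (2 * k) × Fin (2 * k)) →
        Finset (Option (Fin (2 * k) × Fin (2 * k))) :=
      fun d => S.filter (fun w => d = w ∨ (Gk k).Adj d w) with hcov
    have hsub : S ⊆ DF.biUnion cover := by
      intro w hw
      by_cases hwD : w ∈ D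
      · exact Finset.mem_biUnion.2 ⟨w, hDfin.mem_toFinset.2 hwD,
          Finset.mem_filter.2 ⟨hw, Or.inl rfl⟩⟩
      · obtain ⟨x, hxD, hadj⟩ := hD w hwD
        exact Finset.mem_biUnion.2 ⟨x, hDfin.mem_toFinset.2 hxD,
          Finset.mem_filter.2 ⟨hw, Or.inr hadj⟩⟩
    have hper : ∀ d, (cover d).card ≤ 4 * k - 1 := by
      intro d
      match d with
      | none =>
        have : cover none ⊆ {none} := by
          intro w hw
          rw [hcov, Finset.mem_filter] at hw
          obtain ⟨hwS, h | h⟩ := hw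
          · simp [← h]
          · match w with
            | none => exact absurd rfl h.ne
            | some p =>
              rw [hmemS] at hwS
              exact absurd (Gk_adj_none h) (by omega)
        calc (cover none).card ≤ ({none} : Finset _).card := Finset.card_le_card this
          _ = 1 := Finset.card_singleton _
          _ ≤ 4 * k - 1 := by omega
      | some (i, j) =>
        set A : Finset (Option (Fin (2 * k) × Fin (2 * k))) :=
          Finset.univ.image (fun i' : Fin (2 * k) => some (i', j.rev)) with hA
        set B : Finset (Option (Fin (2 * k) × Fin (2 * k))) :=
          Finset.univ.image (fun ℓ : Fin k => some (i.rev, Fin.castLE hkk ℓ)) with hB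
        have hAcard : A.card ≤ 2 * k := le_trans (Finset.card_image_le) (by simp)
        have hBcard : B.card ≤ k := le_trans (Finset.card_image_le) (by simp)
        by_cases hjk : j.val < k
        · -- cover ⊆ insert d B
          have hsub2 : cover (some (i, j)) ⊆ insert (some (i, j)) B := by
            intro w hw
            rw [hcov, Finset.mem_filter] at hw
            obtain ⟨hwS, h | h⟩ := hw
            · rw [← h]; exact Finset.mem_insert_self _ _
            · match w with
              | none =>
                have hcj : k ≤ j.val := Gk_adj_none h.symm
                omega
              | some (i', j') =>
                rw [hmemS] at hwS
                rcases Gk_adj_some_some h with h1 | h1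
                · exfalso
                  have : j'.val = 2 * k - (j.val + 1) := by rw [h1]; exact Fin.val_rev j
                  omega
                · refine Finset.mem_insert_of_mem ?_
                  rw [hB]
                  refine Finset.mem_image.2 ⟨⟨j'.val, hwS⟩, Finset.mem_univ _, ?_⟩
                  rw [h1]
                  simp [Fin.ext_iff]
          calc (cover (some (i, j))).card ≤ (insert (some (i, j)) B).card :=
                Finset.card_le_card hsub2
            _ ≤ B.card + 1 := Finset.card_insert_le _ _
            _ ≤ 4 * k - 1 := by omega
        · -- cover ⊆ insert none (A ∪ B)
          have hsub2 : cover (some (i, j)) ⊆ insert none (A ∪ B) := by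
            intro w hw
            rw [hcov, Finset.mem_filter] at hw
            obtain ⟨hwS, h | h⟩ := hw
            · exfalso
              rw [← h, hmemS] at hwS
              omega
            · match w with
              | none => exact Finset.mem_insert_self _ _
              | some (i', j') =>
                rw [hmemS] at hwS
                refine Finset.mem_insert_of_mem (Finset.mem_union.2 ?_)
                rcases Gk_adj_some_some h with h1 | h1
                · left
                  rw [hA]
                  exact Finset.mem_image.2 ⟨i', Finset.mem_univ _, by rw [h1]⟩
                · right
                  rw [hB]
                  refine Finset.mem_image.2 ⟨⟨j'.val, hwS⟩, Finset.mem_univ _, ?_⟩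
                  rw [h1]
                  simp [Fin.ext_iff]
          calc (cover (some (i, j))).card ≤ (insert none (A ∪ B)).card :=
                Finset.card_le_card hsub2
            _ ≤ (A ∪ B).card + 1 := Finset.card_insert_le _ _
            _ ≤ A.card + B.card + 1 := by
                have := Finset.card_union_le A B; omega
            _ ≤ 4 * k - 1 := by omega
    have hmain : 2 * k ^ 2 + 1 ≤ D.ncard * (4 * k - 1) := by
      have h1 : S.card ≤ (DF.biUnion cover).card := Finset.card_le_card hsub
      have h2 : (DF.biUnion cover).card ≤ ∑ d ∈ DF, (cover d).card :=
        Finset.card_biUnion_le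
      have h3 : ∑ d ∈ DF, (cover d).card ≤ DF.card * (4 * k - 1) := by
        calc ∑ d ∈ DF, (cover d).card ≤ ∑ _d ∈ DF, (4 * k - 1) :=
              Finset.sum_le_sum (fun d _ => hper d)
          _ = DF.card * (4 * k - 1) := by rw [Finset.sum_const, smul_eq_mul]
      have hDcard : D.ncard = DF.card := Set.ncard_eq_toFinset_card D hDfin
      have hfinal : 2 * k ^ 2 + 1 = S.card := by rw [hScard]; ring
      rw [hDcard]
      omega
    refine ⟨hmain, ?_⟩
    by_contra hcon
    push_neg at hcon
    have h4 : 4 * k - 1 + 1 = 4 * k := by omega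
    set m := 4 * k - 1 with hm
    set n := D.ncard with hn
    have hmul : 2 * n * m ≤ k * m := Nat.mul_le_mul_right m hcon
    nlinarith [hmain, hmul, h4]
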